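/- Let $P$ and $Q$ be probability distributions on $[-1,1]$ with $\mathbb{E}_{X\sim Q}[X] < 0$. Let $Q_p = (1-p)Q + p\delta_{\{1\}}$ for $p \in (0,1)$, let $\lambda^* > 0$ be such that $\log \mathbb{E}_{X \sim Q_p}[e^{\lambda^* X}] = 0$, and let $P_p$ be the exponentially tilted distribution $dP_p/dQ_p(x) = e^{\lambda^* x}$. Then $\mathrm{KL}(Q \| P_p) \le \log\frac{1}{1-p} + \lambda^* \, \mathbb{E}_{X\sim Q}[-X]$. -/

import Mathlib

open MeasureTheory

/-- KL divergence `KL(Q‖P) = ∫ log (dQ/dP) dQ`. -/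
noncomputable def klReal (Q P : Measure ℝ) : ℝ :=
  ∫ x, Real.log (Q.rnDeriv P x).toReal ∂Q

/-- For `Q` on `[-1,1]` with negative mean, `Q_p = (1-p)Q + pδ_1`, `λ* > 0` a root of the
log-MGF of `Q_p`, and `P_p` the exponential tilt `dP_p/dQ_p = e^{λ* x}`, we have
`KL(Q‖P_p) ≤ log(1/(1-p)) + λ* E_Q[-X]`. -/
theorem stmt5 (Q : Measure ℝ) [IsProbabilityMeasure Q]
    (hsuppQ : Q (Set.Icc (-1 : ℝ) 1)ᶜ = 0)
    (hmeanQ : (∫ x, x ∂Q) < 0)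
    (p : ℝ) (hp0 : 0 < p) (hp1 : p < 1)
    (Qp : Measure ℝ)
    (hQp : Qp = ENNReal.ofReal (1 - p) • Q + ENNReal.ofReal p • Measure.dirac (1 : ℝ))
    (lam : ℝ) (hlam : 0 < lam)
    (hroot : Real.log (∫ x, Real.exp (lam * x) ∂Qp) = 0)
    (Pp : Measure ℝ)
    (hPp : Pp = Qp.withDensity (fun x => ENNReal.ofReal (Real.exp (lam * x)))) :
    klReal Q Pp ≤ Real.log (1 / (1 - p)) + lam * ∫ x, -x ∂Q := by
  have h1p : (0:ℝ) < 1 - p := by linarith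
  -- integrability of x
  have hx_int : Integrable (fun x : ℝ => x) Q := by
    by_contra h
    rw [integral_undef h] at hmeanQ
    exact lt_irrefl 0 hmeanQ
  -- basic facts about Qp
  have hQpfin : IsFiniteMeasure Qp := by
    constructor
    rw [hQp]
    simp [measure_univ]
  have hcQ_le : ENNReal.ofReal (1 - p) • Q ≤ Qp := by
    rw [hQp]; exact Measure.le_add_right le_rfl
  have habsQQp : Q ≪ Qp := by
    refine Measure.AbsolutelyContinuous.mk (fun s hs hQps => ?_)
    have h0 : (ENNReal.ofReal (1 - p) • Q) s = 0 :=
      le_antisymm ((hcQ_le s).trans hQps.le) zero_le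
    simp only [Measure.smul_apply, smul_eq_mul, mul_eq_zero] at h0
    rcases h0 with h0 | h0
    · exact absurd h0 (by simp [ENNReal.ofReal_eq_zero]; linarith)
    · exact h0
  -- Q ≪ Pp
  have hf_meas : AEMeasurable (fun x : ℝ => ENNReal.ofReal (Real.exp (lam * x))) Qp :=
    (ENNReal.measurable_ofReal.comp ((Real.continuous_exp.comp
      (continuous_const.mul continuous_id)).measurable)).aemeasurable
  have hf_ne_zero : ∀ᵐ x ∂Qp, ENNReal.ofReal (Real.exp (lam * x)) ≠ 0 :=
    Filter.Eventually.of_forall fun x => by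
      simp [ENNReal.ofReal_eq_zero, not_le, Real.exp_pos]
  have hf_ne_top : ∀ᵐ x ∂Qp, ENNReal.ofReal (Real.exp (lam * x)) ≠ ⊤ :=
    Filter.Eventually.of_forall fun x => ENNReal.ofReal_ne_top
  have habsQpPp : Qp ≪ Pp := by
    rw [hPp]; exact withDensity_absolutelyContinuous' hf_meas hf_ne_zero
  have habsQPp : Q ≪ Pp := habsQQp.trans habsQpPp
  have hPpSF : SigmaFinite Pp := by
    rw [hPp]
    exact SigmaFinite.withDensity_of_ne_top hf_ne_top
  -- bound on rnDeriv Q Qp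
  have hsmul : (ENNReal.ofReal (1 - p) • Q).rnDeriv Qp =ᵐ[Qp]
      ENNReal.ofReal (1 - p) • Q.rnDeriv Qp :=
    Measure.rnDeriv_smul_left_of_ne_top' Q Qp ENNReal.ofReal_ne_top
  have hle1 : (ENNReal.ofReal (1 - p) • Q).rnDeriv Qp ≤ᵐ[Qp] 1 :=
    Measure.rnDeriv_le_one_of_le hcQ_le
  have hQQp_bound : ∀ᵐ x ∂Qp, Q.rnDeriv Qp x ≤ (ENNReal.ofReal (1 - p))⁻¹ := by
    filter_upwards [hsmul, hle1] with x h1 h2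
    rw [h1] at h2
    simp only [Pi.smul_apply, smul_eq_mul, Pi.one_apply] at h2
    rw [ENNReal.le_inv_iff_mul_le, mul_comm]
    exact h2
  -- rnDeriv Q Pp formula
  have hform : Q.rnDeriv Pp =ᵐ[Qp]
      fun x => (ENNReal.ofReal (Real.exp (lam * x)))⁻¹ * Q.rnDeriv Qp x := by
    rw [hPp]
    exact Measure.rnDeriv_withDensity_right Q Qp hf_meas hf_ne_zero hf_ne_top
  -- key pointwise bound a.e. Q
  have hpos : ∀ᵐ x ∂Q, 0 < Q.rnDeriv Pp x := Measure.rnDeriv_pos habsQPp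
  have hlt_top : ∀ᵐ x ∂Q, Q.rnDeriv Pp x < ⊤ :=
    habsQPp.ae_le (Measure.rnDeriv_lt_top Q Pp)
  have hbound : ∀ᵐ x ∂Q, Real.log (Q.rnDeriv Pp x).toReal ≤
      Real.log (1 / (1 - p)) + lam * (-x) := by
    filter_upwards [habsQQp.ae_le hform, habsQQp.ae_le hQQp_bound, hpos, hlt_top]
      with x hform hQb hpos hlt
    have hRHSne : (ENNReal.ofReal (Real.exp (lam * x)))⁻¹ * (ENNReal.ofReal (1 - p))⁻¹ ≠ ⊤ := by
      apply ENNReal.mul_ne_top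
      · exact ENNReal.inv_ne_top.2 (ENNReal.ofReal_pos.2 (Real.exp_pos _)).ne'
      · exact ENNReal.inv_ne_top.2 (ENNReal.ofReal_pos.2 h1p).ne'
    have hle : Q.rnDeriv Pp x ≤
        (ENNReal.ofReal (Real.exp (lam * x)))⁻¹ * (ENNReal.ofReal (1 - p))⁻¹ := by
      rw [hform]
      exact mul_le_mul_right hQb _
    have htoReal : (Q.rnDeriv Pp x).toReal ≤
        (Real.exp (lam * x))⁻¹ * (1 - p)⁻¹ := by
      have := ENNReal.toReal_mono hRHSne hle
      rwa [ENNReal.toReal_mul, ENNReal.toReal_inv, ENNReal.toReal_inv,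
        ENNReal.toReal_ofReal (Real.exp_pos _).le, ENNReal.toReal_ofReal h1p.le] at this
    have hposR : (0:ℝ) < (Q.rnDeriv Pp x).toReal :=
      ENNReal.toReal_pos hpos.ne' hlt.ne
    calc Real.log (Q.rnDeriv Pp x).toReal
        ≤ Real.log ((Real.exp (lam * x))⁻¹ * (1 - p)⁻¹) :=
          Real.log_le_log hposR htoReal
      _ = Real.log (1 / (1 - p)) + lam * (-x) := by
          rw [Real.log_mul (by positivity) (by positivity), Real.log_inv, Real.log_inv,
            Real.log_exp, one_div, Real.log_inv]
          ring
  -- bound function is integrable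
  have hneg : Integrable (fun x : ℝ => -x) Q := by exact hx_int.neg
  have hmul : Integrable (fun x : ℝ => lam * -x) Q := hneg.const_mul lam
  have hRHS : (∫ x, (Real.log (1 / (1 - p)) + lam * (-x)) ∂Q)
      = Real.log (1 / (1 - p)) + lam * ∫ x, -x ∂Q := by
    rw [integral_add (integrable_const _) hmul, integral_const, integral_const_mul]
    simp [measure_univ]
  by_cases hint : Integrable (fun x => Real.log (Q.rnDeriv Pp x).toReal) Q
  · calc klReal Q Pp ≤ ∫ x, (Real.log (1 / (1 - p)) + lam * (-x)) ∂Q :=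
        integral_mono_ae hint ((integrable_const _).add hmul) hbound
      _ = _ := hRHS
  · unfold klReal
    rw [integral_undef hint]
    have h1 : 0 < Real.log (1 / (1 - p)) := by
      apply Real.log_pos
      rw [lt_div_iff₀ h1p]
      linarith
    have h2 : 0 < lam * ∫ x, -x ∂Q := by
      apply mul_pos hlam
      rw [integral_neg]
      linarith
    linarith
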